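/- Let d ≥ 1 and let p, q ∈ EuclideanSpace ℝ (Fin d). Then the cyclic distance decomposes coordinatewise: ⨅_{v : Fin d → ℤ} ‖p - (q + v̄)‖ = sqrt( Σ_{i} ( ⨅_{n ∈ ℤ} |p i - q i - n| )² ). -/

import Mathlib

/-- The point of `EuclideanSpace ℝ (Fin d)` whose `i`-th coordinate is the integer `v i`. -/
noncomputable def latticePt {d : ℕ} (v : Fin d → ℤ) : EuclideanSpace ℝ (Fin d) :=
  WithLp.toLp 2 (fun i => (v i : ℝ))

/-- The cyclic distance decomposes coordinatewise: it is the Euclidean norm of the vector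
of one-dimensional cyclic distances. -/
theorem stmt3 {d : ℕ} (hd : 1 ≤ d) (p q : EuclideanSpace ℝ (Fin d)) :
    ⨅ v : Fin d → ℤ, ‖p - (q + latticePt v)‖ =
      Real.sqrt (∑ i, (⨅ n : ℤ, |p i - q i - (n : ℝ)|) ^ 2) := by
  have key : ∀ x : ℝ, (⨅ n : ℤ, |x - (n : ℝ)|) = |x - (round x : ℤ)| := by
    intro x
    refine le_antisymm (ciInf_le ⟨0, ?_⟩ (round x)) (le_ciInf fun n => round_le x n)
    rintro y ⟨n, rfl⟩; positivity
  set r : Fin d → ℤ := fun i => round (p i - q i) with hr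
  have hnorm : ∀ v : Fin d → ℤ, ‖p - (q + latticePt v)‖ =
      Real.sqrt (∑ i, (p i - q i - (v i : ℝ)) ^ 2) := by
    intro v
    rw [EuclideanSpace.norm_eq]
    congr 1
    refine Finset.sum_congr rfl fun i _ => ?_
    simp [latticePt, sub_sub, Real.norm_eq_abs, sq_abs]
  have hbdd : BddBelow (Set.range fun v : Fin d → ℤ => ‖p - (q + latticePt v)‖) :=
    ⟨0, by rintro y ⟨v, rfl⟩; exact norm_nonneg _⟩
  refine le_antisymm ?_ ?_
  · calc ⨅ v : Fin d → ℤ, ‖p - (q + latticePt v)‖ ≤ ‖p - (q + latticePt r)‖ :=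
        ciInf_le hbdd r
      _ = Real.sqrt (∑ i, (p i - q i - (r i : ℝ)) ^ 2) := hnorm r
      _ = _ := by
        congr 1
        refine Finset.sum_congr rfl fun i _ => ?_
        rw [key (p i - q i), sq_abs]
  · refine le_ciInf fun v => ?_
    rw [hnorm v]
    apply Real.sqrt_le_sqrt
    refine Finset.sum_le_sum fun i _ => ?_
    rw [key (p i - q i), ← sq_abs (p i - q i - (v i : ℝ))]
    exact pow_le_pow_left₀ (abs_nonneg _) (round_le _ _) 2
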